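/- If j is an integer and n is a positive integer such that j(j-1)(j-2)···(j-n+1) = n!, then j = n when n is odd, and j = n or j = -1 when n is even. -/

import Mathlib

lemma asc_prod (k n : ℕ) : ((k.ascFactorial n : ℤ)) = ∏ i ∈ Finset.range n, ((k:ℤ) + i) := by
  induction n with
  | zero => simp
  | succ n ih =>
      rw [Finset.prod_range_succ, ← ih, Nat.ascFactorial_succ]
      push_cast; ring

lemma fact_lt_asc : ∀ n, 1 ≤ n → ∀ k, 2 ≤ k → n.factorial < k.ascFactorial n := by
  intro n
  induction n with
  | zero => omega
  | succ n ih =>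
      intro _ k hk
      rw [Nat.factorial_succ, Nat.ascFactorial_succ]
      rcases Nat.eq_zero_or_pos n with rfl | hn
      · simpa using (show 1 < k by omega)
      · have h1 := ih hn k hk
        have h2 := n.factorial_pos
        nlinarith

/-- If `j` is an integer and `n` a positive integer with falling factorial
`j(j-1)⋯(j-n+1) = n!`, then `j = n` when `n` is odd, and `j = n` or `j = -1`
when `n` is even. -/
theorem falling_factorial_eq_factorial (n : ℕ) (hn : 0 < n) (j : ℤ)
    (h : ∏ i ∈ Finset.range n, (j - i) = (n.factorial : ℤ)) :
    (Odd n → j = n) ∧ (Even n → j = n ∨ j = -1) := by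
  have hfpos : (0:ℤ) < n.factorial := by exact_mod_cast n.factorial_pos
  rcases lt_or_ge j 0 with hj | hj
  · -- j < 0
    set k : ℕ := (-j).toNat with hkdef
    have hk : (k : ℤ) = -j := Int.toNat_of_nonneg (by omega)
    have hk1 : 1 ≤ k := by omega
    have hprod : ∏ i ∈ Finset.range n, (j - i) = (-1)^n * (k.ascFactorial n : ℤ) := by
      have e1 : ∏ i ∈ Finset.range n, (j - (i:ℤ)) = ∏ i ∈ Finset.range n, (-((k:ℤ) + i)) :=
        Finset.prod_congr rfl (fun i _ => by omega)
      rw [asc_prod, e1]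
      calc ∏ i ∈ Finset.range n, -((k:ℤ)+i)
          = ∏ i ∈ Finset.range n, ((-1:ℤ) * ((k:ℤ)+i)) :=
            Finset.prod_congr rfl fun _ _ => by ring
        _ = (∏ _i ∈ Finset.range n, (-1:ℤ)) * ∏ i ∈ Finset.range n, ((k:ℤ)+i) :=
            Finset.prod_mul_distrib
        _ = (-1)^n * ∏ i ∈ Finset.range n, ((k:ℤ)+i) := by
            rw [Finset.prod_const, Finset.card_range]
    rw [hprod] at h
    constructor
    · intro hodd
      exfalso
      rw [hodd.neg_one_pow] at h
      have hp : 0 < k.ascFactorial n := by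
        have := Nat.ascFactorial_pos (k-1) n
        rwa [Nat.sub_add_cancel hk1] at this
      have : (0:ℤ) < (k.ascFactorial n : ℤ) := by exact_mod_cast hp
      nlinarith
    · intro heven
      rw [heven.neg_one_pow, one_mul] at h
      have h' : k.ascFactorial n = n.factorial := by exact_mod_cast h
      right
      rcases Nat.lt_or_ge k 2 with hk2 | hk2
      · interval_cases k
        omega
      · exact absurd h'.symm (Nat.ne_of_lt (fact_lt_asc n hn k hk2))
  rcases lt_or_ge j (n:ℤ) with hjn | hjn
  · -- 0 ≤ j < n : a factor is zero
    exfalso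
    have hz : ∏ i ∈ Finset.range n, (j - i) = 0 :=
      Finset.prod_eq_zero (Finset.mem_range.2 (show j.toNat < n by omega)) (by
        have : ((j.toNat : ℤ)) = j := Int.toNat_of_nonneg hj
        omega)
    rw [hz] at h
    omega
  · -- j ≥ n
    set t : ℕ := (j - n).toNat with htdef
    have ht : (t : ℤ) = j - n := Int.toNat_of_nonneg (by omega)
    have e2 : ∏ i ∈ Finset.range n, (((t+1:ℕ):ℤ) + i) = ∏ i ∈ Finset.range n, (j - i) := by
      rw [← Finset.prod_range_reflect (fun i => j - i) n]
      refine Finset.prod_congr rfl fun i hi => ?_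
      have := Finset.mem_range.1 hi
      omega
    rw [← e2, ← asc_prod] at h
    have h' : (t+1).ascFactorial n = n.factorial := by exact_mod_cast h
    have ht0 : t = 0 := by
      by_contra h0
      exact absurd h'.symm (Nat.ne_of_lt (fact_lt_asc n hn (t+1) (by omega)))
    have hjn' : j = n := by omega
    exact ⟨fun _ => hjn', fun _ => Or.inl hjn'⟩
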